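/- Let n ≥ 1, let u, v : Fin n → ℂ be unit vectors (∑ i, |u i|² = 1 and ∑ i, |v i|² = 1), and let θ ∈ [0, π/2]. For each i define the quaternion q i = √2 (cos θ · u i + sin θ · (v i)𝐣), i.e. the quaternion with components (√2 cos θ · Re(u i), √2 cos θ · Im(u i), √2 sin θ · Re(v i), √2 sin θ · Im(v i)). Then the polygon with edges Hopf(q i) closes, i.e. ∑ i, Hopf(q i) = 0, if and only if θ = π/4 and ∑ i, conj(u i) · v i = 0 (that is, (u,v) is a Hermitian orthonormal 2-frame in ℂⁿ). -/

import Mathlib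

open scoped Quaternion
open Real

/-- The quaternion unit 𝐢. -/
noncomputable def qI : ℍ[ℝ] := ⟨0, 1, 0, 0⟩

/-- The Hopf map `q ↦ q̄ · 𝐢 · q`. -/
noncomputable def Hopf (q : ℍ[ℝ]) : ℍ[ℝ] := star q * qI * q

/-- The quaternion `√2 (cos θ · u + sin θ · v·𝐣)` for complex numbers `u`, `v`. -/
noncomputable def joinCoord (θ : ℝ) (u v : ℂ) : ℍ[ℝ] :=
  ⟨Real.sqrt 2 * Real.cos θ * u.re, Real.sqrt 2 * Real.cos θ * u.im,
   Real.sqrt 2 * Real.sin θ * v.re, Real.sqrt 2 * Real.sin θ * v.im⟩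

lemma hopf_join (θ : ℝ) (u v : ℂ) :
    Hopf (joinCoord θ u v) =
      ⟨0, 2 * Real.cos θ ^ 2 * (‖u‖ ^ 2) - 2 * Real.sin θ ^ 2 * (‖v‖ ^ 2),
        -(4 * Real.cos θ * Real.sin θ * ((starRingEnd ℂ) u * v).im),
        4 * Real.cos θ * Real.sin θ * ((starRingEnd ℂ) u * v).re⟩ := by
  have h2 : Real.sqrt 2 ^ 2 = 2 := Real.sq_sqrt (by norm_num)
  ext <;>
  simp [Hopf, Quaternion.re_mul, Quaternion.imI_mul, Quaternion.imJ_mul,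
    Quaternion.imK_mul] <;>
  simp [joinCoord, qI, Complex.sq_norm, Complex.normSq_apply, Complex.mul_re, Complex.mul_im] <;>
  ring_nf <;> simp [h2] <;> ring

lemma quat_sum_comp {ι : Type*} (s : Finset ι) (f : ι → ℍ[ℝ]) :
    (∑ i ∈ s, f i).re = ∑ i ∈ s, (f i).re ∧ (∑ i ∈ s, f i).imI = ∑ i ∈ s, (f i).imI ∧
    (∑ i ∈ s, f i).imJ = ∑ i ∈ s, (f i).imJ ∧ (∑ i ∈ s, f i).imK = ∑ i ∈ s, (f i).imK := by
  classical
  refine ⟨?_, ?_, ?_, ?_⟩ <;>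
  · induction s using Finset.induction_on with
    | empty => simp
    | insert _ _ h ih => simp [Finset.sum_insert h, ih]


/-- The polygon with edges `Hopf(√2(cos θ · u i + sin θ · (v i)𝐣))` closes if and only if
`θ = π/4` and `u ⊥ v`, i.e. `(u,v)` is a Hermitian orthonormal 2-frame in ℂⁿ. -/
theorem closes_iff_stiefel_frame (n : ℕ) (hn : 1 ≤ n) (u v : Fin n → ℂ)
    (hu : ∑ i, ‖u i‖ ^ 2 = 1) (hv : ∑ i, ‖v i‖ ^ 2 = 1)
    (θ : ℝ) (hθ : θ ∈ Set.Icc (0 : ℝ) (π / 2)) :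
    (∑ i, Hopf (joinCoord θ (u i) (v i))) = 0
      ↔ θ = π / 4 ∧ ∑ i, (starRingEnd ℂ) (u i) * v i = 0 := by
  set S := ∑ i, (starRingEnd ℂ) (u i) * v i with hS
  have key : (∑ i, Hopf (joinCoord θ (u i) (v i))) =
      ⟨0, 2 * Real.cos θ ^ 2 - 2 * Real.sin θ ^ 2,
        -(4 * Real.cos θ * Real.sin θ * S.im), 4 * Real.cos θ * Real.sin θ * S.re⟩ := by
    obtain ⟨h1, h2, h3, h4⟩ := quat_sum_comp Finset.univ (fun i => Hopf (joinCoord θ (u i) (v i)))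
    ext
    · rw [h1]; simp [hopf_join]
    · rw [h2]
      simp only [hopf_join]
      rw [Finset.sum_sub_distrib, ← Finset.mul_sum, ← Finset.mul_sum, hu, hv]
      simp
    · rw [h3]
      simp [hopf_join, hS, Complex.im_sum, Finset.mul_sum]
    · rw [h4]
      simp [hopf_join, hS, Complex.re_sum, Finset.mul_sum]
  rw [key]
  refine QuaternionAlgebra.ext_iff.trans ?_
  simp only [Quaternion.re_zero, Quaternion.imI_zero, Quaternion.imJ_zero,
    Quaternion.imK_zero]
  constructor
  · rintro ⟨-, h1, h2, h3⟩
    have hcos : Real.cos (2 * θ) = 0 := by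
      rw [Real.cos_two_mul']
      linarith
    have hθ4 : θ = π / 4 := by
      have h2θ : 2 * θ ∈ Set.Icc 0 π := by
        constructor <;> [linarith [hθ.1]; linarith [hθ.2]]
      have : Real.cos (2 * θ) = Real.cos (π / 2) := by rw [hcos, Real.cos_pi_div_two]
      have := Real.injOn_cos h2θ ⟨by positivity, by linarith [Real.pi_pos]⟩ this
      linarith
    refine ⟨hθ4, ?_⟩
    subst hθ4
    rw [Real.cos_pi_div_four, Real.sin_pi_div_four] at h2 h3
    have h2' : Real.sqrt 2 / 2 * (Real.sqrt 2 / 2) = 1 / 2 := by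
      rw [div_mul_div_comm, Real.mul_self_sqrt (by norm_num)]; norm_num
    have hre : S.re = 0 := by linear_combination (1/2) * h3 - 2 * S.re * h2'
    have him : S.im = 0 := by linear_combination (-(1/2)) * h2 - 2 * S.im * h2'
    apply Complex.ext <;> simp [hre, him]
  · rintro ⟨rfl, hS0⟩
    rw [hS0]
    rw [Real.cos_pi_div_four, Real.sin_pi_div_four]
    norm_num
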